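/- If K_{s_1}^{t_1} and K_{s_2}^{t_2} (with 2 ≤ t_i ≤ s_i and s_1+t_1 = s_2+t_2 = n) have equal distance spectra, then t_1 = t_2 and s_1 = s_2, i.e., the graphs are isomorphic. -/

import Mathlib

noncomputable def sortedEigenvalues {ι : Type*} [Fintype ι] [DecidableEq ι]
    (A : Matrix ι ι ℝ) (hA : A.IsHermitian) : List ℝ :=
  (Finset.univ.val.map hA.eigenvalues).sort (· ≤ ·)

/-- `eig A hA k` is the `k`-th largest eigenvalue of `A` (1-indexed). -/
noncomputable def eig {ι : Type*} [Fintype ι] [DecidableEq ι]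
    (A : Matrix ι ι ℝ) (hA : A.IsHermitian) (k : ℕ) : ℝ :=
  (sortedEigenvalues A hA)[Fintype.card ι - k]!
/-- The distance matrix of the graph `K_s^t`, obtained from the complete graph `K_s`
by attaching a pendant vertex at each of `t` of its vertices (`t ≤ s`).
Clique vertices are `Sum.inl`, pendant vertices are `Sum.inr`; the `i`-th pendant
vertex is attached to the `i`-th clique vertex. -/
def DKst (s t : ℕ) : Matrix (Fin s ⊕ Fin t) (Fin s ⊕ Fin t) ℝ :=
  fun x y =>
    match x, y with
    | .inl a, .inl b => if a = b then 0 else 1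
    | .inl a, .inr b => if (a : ℕ) = (b : ℕ) then 1 else 2
    | .inr a, .inl b => if (a : ℕ) = (b : ℕ) then 1 else 2
    | .inr a, .inr b => if a = b then 0 else 3

open Polynomial Matrix

section aux
variable {m : Type*} [Fintype m] [DecidableEq m]

lemma charpoly_conj_unit (U V D : Matrix m m ℝ) (hUV : U * V = 1) (hVU : V * U = 1)
    : (U * D * V).charpoly = D.charpoly := by
  have hmapUV : U.map C * V.map C = 1 := by
    rw [← Matrix.map_mul, hUV]; ext i j; simp [Matrix.one_apply, apply_ite]
  have hmapVU : V.map C * U.map C = 1 := by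
    rw [← Matrix.map_mul, hVU]; ext i j; simp [Matrix.one_apply, apply_ite]
  have hs : (Matrix.scalar m (X : ℝ[X])) = (X : ℝ[X]) • (1 : Matrix m m ℝ[X]) := by
    ext i j
    by_cases h : i = j <;> simp [Matrix.scalar_apply, Matrix.one_apply, Matrix.diagonal_apply, h]
  have key : charmatrix (U * D * V) = U.map C * charmatrix D * V.map C := by
    unfold charmatrix
    simp only [RingHom.mapMatrix_apply, hs]
    rw [Matrix.map_mul, Matrix.map_mul, mul_sub, sub_mul, mul_smul_comm, smul_mul_assoc,
      mul_one, hmapUV, mul_assoc]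
  unfold Matrix.charpoly
  rw [key, det_mul, det_mul, mul_comm, ← mul_assoc, ← det_mul, hmapVU]
  simp

lemma charpoly_diagonal_real (d : m → ℝ) :
    (Matrix.diagonal d).charpoly = ∏ i, (X - C (d i)) := by
  unfold Matrix.charpoly
  have : charmatrix (Matrix.diagonal d) = Matrix.diagonal (fun i => X - C (d i)) := by
    ext i j
    rcases eq_or_ne i j with rfl | h
    · simp [charmatrix_apply_eq]
    · simp [charmatrix_apply_ne _ _ _ h, Matrix.diagonal_apply_ne _ h,
        Matrix.diagonal_apply_ne d h]
  rw [this, det_diagonal]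

lemma herm_charpoly (A : Matrix m m ℝ) (hA : A.IsHermitian) :
    A.charpoly = ((Finset.univ.val.map hA.eigenvalues).map (fun r => X - C r)).prod := by
  conv_lhs => rw [hA.spectral_theorem, Unitary.conjStarAlgAut_apply]
  rw [charpoly_conj_unit _ _ _ ((Matrix.mem_unitaryGroup_iff).mp (hA.eigenvectorUnitary).2)
    ((Matrix.mem_unitaryGroup_iff').mp (hA.eigenvectorUnitary).2)]
  have : (RCLike.ofReal ∘ hA.eigenvalues : m → ℝ) = hA.eigenvalues := by
    funext i; simp
  rw [this, charpoly_diagonal_real]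
  rw [Multiset.map_map, Finset.prod]
  rfl

lemma trace_sq_eq (A : Matrix m m ℝ) (hA : A.IsHermitian) :
    Matrix.trace (A * A) = ((Finset.univ.val.map hA.eigenvalues).map (fun r => r * r)).sum := by
  conv_lhs => rw [hA.spectral_theorem, Unitary.conjStarAlgAut_apply]
  set U : Matrix m m ℝ := ((hA.eigenvectorUnitary : Matrix m m ℝ))
  set D : Matrix m m ℝ := Matrix.diagonal (RCLike.ofReal ∘ hA.eigenvalues)
  have h1 : star U * U = 1 := (Matrix.mem_unitaryGroup_iff').mp (hA.eigenvectorUnitary).2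
  have h2 : U * star U = 1 := (Matrix.mem_unitaryGroup_iff).mp (hA.eigenvectorUnitary).2
  have : (U * D * star U) * (U * D * star U) = U * (D * D) * star U := by
    simp only [mul_assoc]
    rw [← mul_assoc (star U) U (D * star U), h1, one_mul]
  rw [this, Matrix.trace_mul_cycle, ← mul_assoc, h1, one_mul]
  have : D * D = Matrix.diagonal (fun i => hA.eigenvalues i * hA.eigenvalues i) := by
    simp [D, Matrix.diagonal_mul_diagonal]
  rw [this, Matrix.trace_diagonal]
  rw [Multiset.map_map, Finset.sum]
  rfl

end aux

lemma sumIte {k : ℕ} (c : Fin k) (x y : ℝ) :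
    ∑ a : Fin k, (if a = c then x else y) = x + ((k : ℝ) - 1) * y := by
  have h : ∀ a : Fin k, (if a = c then x else y) = y + (if a = c then x - y else 0) := by
    intro a; split <;> ring
  rw [Finset.sum_congr rfl (fun a _ => h a), Finset.sum_add_distrib, Finset.sum_const,
    Finset.sum_ite_eq' Finset.univ c (fun _ => x - y)]
  simp [Finset.card_univ]
  ring

lemma DKst_herm (s t : ℕ) : (DKst s t).IsHermitian := by
  ext x y
  cases x <;> cases y <;>
    simp [Matrix.conjTranspose_apply, DKst, eq_comm]

lemma trace_sq_DKst (s t : ℕ) (h : t ≤ s) :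
    Matrix.trace (DKst s t * DKst s t) =
      (s:ℝ)^2 + 9*(t:ℝ)^2 + 8*(s:ℝ)*(t:ℝ) - (s:ℝ) - 15*(t:ℝ) := by
  rw [Matrix.trace]
  simp only [Matrix.diag_apply, Matrix.mul_apply, Fintype.sum_sum_type]
  have e11 : ∀ a : Fin s,
      ∑ a' : Fin s, DKst s t (.inl a) (.inl a') * DKst s t (.inl a') (.inl a)
        = ((s:ℝ) - 1) := by
    intro a
    have : ∀ a' : Fin s, DKst s t (.inl a) (.inl a') * DKst s t (.inl a') (.inl a)
        = if a' = a then 0 else 1 := by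
      intro a'
      by_cases hh : a' = a
      · simp [DKst, hh]
      · simp [DKst, hh, Ne.symm hh]
    rw [Finset.sum_congr rfl (fun a' _ => this a'), sumIte a 0 1]
    ring
  have e12 : ∑ a : Fin s, ∑ b : Fin t,
      DKst s t (.inl a) (.inr b) * DKst s t (.inr b) (.inl a) = (t:ℝ) * (4*(s:ℝ) - 3) := by
    rw [Finset.sum_comm]
    have inner : ∀ b : Fin t, ∑ a : Fin s,
        DKst s t (.inl a) (.inr b) * DKst s t (.inr b) (.inl a) = 4*(s:ℝ) - 3 := by
      intro b
      have : ∀ a : Fin s, DKst s t (.inl a) (.inr b) * DKst s t (.inr b) (.inl a)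
          = if a = (⟨(b : ℕ), lt_of_lt_of_le b.2 h⟩ : Fin s) then 1 else 4 := by
        intro a
        by_cases hh : (a : ℕ) = (b : ℕ)
        · simp [DKst, hh, eq_comm, Fin.ext_iff]
        · simp [DKst, hh, Ne.symm hh, Fin.ext_iff]; norm_num
      rw [Finset.sum_congr rfl (fun a _ => this a), sumIte _ 1 4]
      ring
    rw [Finset.sum_congr rfl (fun b _ => inner b), Finset.sum_const, Finset.card_univ]
    simp [nsmul_eq_mul]
  have e21 : ∑ b : Fin t, ∑ a : Fin s,
      DKst s t (.inr b) (.inl a) * DKst s t (.inl a) (.inr b) = (t:ℝ) * (4*(s:ℝ) - 3) := by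
    have inner : ∀ b : Fin t, ∑ a : Fin s,
        DKst s t (.inr b) (.inl a) * DKst s t (.inl a) (.inr b) = 4*(s:ℝ) - 3 := by
      intro b
      have : ∀ a : Fin s, DKst s t (.inr b) (.inl a) * DKst s t (.inl a) (.inr b)
          = if a = (⟨(b : ℕ), lt_of_lt_of_le b.2 h⟩ : Fin s) then 1 else 4 := by
        intro a
        by_cases hh : (a : ℕ) = (b : ℕ)
        · simp [DKst, hh, eq_comm, Fin.ext_iff]
        · simp [DKst, hh, Ne.symm hh, Fin.ext_iff]; norm_num
      rw [Finset.sum_congr rfl (fun a _ => this a), sumIte _ 1 4]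
      ring
    rw [Finset.sum_congr rfl (fun b _ => inner b), Finset.sum_const, Finset.card_univ]
    simp [nsmul_eq_mul]
  have e22 : ∀ b : Fin t,
      ∑ b' : Fin t, DKst s t (.inr b) (.inr b') * DKst s t (.inr b') (.inr b)
        = 9 * ((t:ℝ) - 1) := by
    intro b
    have : ∀ b' : Fin t, DKst s t (.inr b) (.inr b') * DKst s t (.inr b') (.inr b)
        = if b' = b then 0 else 9 := by
      intro b'
      by_cases hh : b' = b
      · simp [DKst, hh]
      · simp [DKst, hh, Ne.symm hh]; norm_num
    rw [Finset.sum_congr rfl (fun b' _ => this b'), sumIte b 0 9]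
    ring
  rw [Finset.sum_add_distrib, Finset.sum_add_distrib,
    Finset.sum_congr rfl (fun a _ => e11 a), Finset.sum_congr rfl (fun b _ => e22 b),
    e12, Finset.sum_congr rfl (fun b _ => (by rfl : _ = ∑ a : Fin s,
      DKst s t (.inr b) (.inl a) * DKst s t (.inl a) (.inr b))), e21,
    Finset.sum_const, Finset.sum_const, Finset.card_univ, Finset.card_univ]
  simp [nsmul_eq_mul]
  ring

theorem Kst_determined_by_spectrum {n s₁ t₁ s₂ t₂ : ℕ}
    (ht₁ : 2 ≤ t₁) (hts₁ : t₁ ≤ s₁) (ht₂ : 2 ≤ t₂) (hts₂ : t₂ ≤ s₂)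
    (hn₁ : s₁ + t₁ = n) (hn₂ : s₂ + t₂ = n)
    (hspec : (DKst s₁ t₁).charpoly = (DKst s₂ t₂).charpoly) :
    t₁ = t₂ ∧ s₁ = s₂ := by
  have hherm1 := DKst_herm s₁ t₁
  have hherm2 := DKst_herm s₂ t₂
  set E₁ : Multiset ℝ := Finset.univ.val.map hherm1.eigenvalues with hE₁def
  set E₂ : Multiset ℝ := Finset.univ.val.map hherm2.eigenvalues with hE₂def
  have hprod : (E₁.map (fun r => X - C r)).prod = (E₂.map (fun r => X - C r)).prod := by
    rw [← herm_charpoly _ hherm1, ← herm_charpoly _ hherm2, hspec]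
  have hE : E₁ = E₂ := by
    have := congrArg Polynomial.roots hprod
    rwa [roots_multiset_prod_X_sub_C, roots_multiset_prod_X_sub_C] at this
  have hsum : (E₁.map (fun r => r * r)).sum = (E₂.map (fun r => r * r)).sum := by rw [hE]
  have key : (s₁:ℝ)^2 + 9*(t₁:ℝ)^2 + 8*(s₁:ℝ)*(t₁:ℝ) - (s₁:ℝ) - 15*(t₁:ℝ)
      = (s₂:ℝ)^2 + 9*(t₂:ℝ)^2 + 8*(s₂:ℝ)*(t₂:ℝ) - (s₂:ℝ) - 15*(t₂:ℝ) := by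
    rw [← trace_sq_DKst s₁ t₁ hts₁, ← trace_sq_DKst s₂ t₂ hts₂,
      trace_sq_eq _ hherm1, trace_sq_eq _ hherm2]
    exact hsum
  have hn1R : (s₁:ℝ) = (n:ℝ) - (t₁:ℝ) := by
    have : (s₁:ℝ) + (t₁:ℝ) = (n:ℝ) := by exact_mod_cast congrArg (Nat.cast : ℕ → ℝ) hn₁
    linarith
  have hn2R : (s₂:ℝ) = (n:ℝ) - (t₂:ℝ) := by
    have : (s₂:ℝ) + (t₂:ℝ) = (n:ℝ) := by exact_mod_cast congrArg (Nat.cast : ℕ → ℝ) hn₂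
    linarith
  rw [hn1R, hn2R] at key
  have hfac : ((t₁:ℝ) - (t₂:ℝ)) * (6*(n:ℝ) + 2*((t₁:ℝ) + (t₂:ℝ)) - 14) = 0 := by
    linear_combination key
  have hn4 : (4:ℕ) ≤ n := by omega
  have hpos : 0 < 6*(n:ℝ) + 2*((t₁:ℝ) + (t₂:ℝ)) - 14 := by
    have h1 : (4:ℝ) ≤ (n:ℝ) := by exact_mod_cast hn4
    have h2 : (0:ℝ) ≤ (t₁:ℝ) := by positivity
    have h3 : (0:ℝ) ≤ (t₂:ℝ) := by positivity
    linarith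
  have ht : (t₁:ℝ) = (t₂:ℝ) := by
    rcases mul_eq_zero.mp hfac with h | h
    · linarith
    · linarith
  have htN : t₁ = t₂ := by exact_mod_cast ht
  exact ⟨htN, by omega⟩
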